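/- Let U be the Hilbert space L²([0,T], ℝ^m) and X = L²([0,T], ℝ^n). Let W: U → X be the linear operator W[u](t) = ∫_{t_{k(t)}}^{t} Φ(t,s)B(s)u(s) ds, where [0,T] is partitioned into intervals [t_k, t_{k+1}) of length τ, k(t) is the index with t_{k(t)} ≤ t < t_{k(t)+1}, ‖Φ(t,s)‖_op ≤ exp((t−s)L_f) and ‖B(s)‖_op ≤ L_f for all s ≤ t. Then the operator norm of W satisfies ‖W‖_op ≤ τ·L_f·exp(τL_f). -/

import Mathlib

open Matrix MeasureTheory Set
open scoped ENNReal NNReal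

noncomputable def opNorm {m n : ℕ} (M : Matrix (Fin m) (Fin n) ℝ) : ℝ :=
  ‖LinearMap.toContinuousLinearMap (Matrix.toEuclideanLin M)‖

lemma opNorm_nonneg' {a b : ℕ} (M : Matrix (Fin a) (Fin b) ℝ) : 0 ≤ opNorm M :=
  norm_nonneg _

lemma euclid_norm_sq {k : ℕ} (y : Fin k → ℝ) :
    ‖(WithLp.equiv 2 (Fin k → ℝ)).symm y‖ ^ 2 = ∑ j, (y j) ^ 2 := by
  rw [EuclideanSpace.norm_eq, Real.sq_sqrt (by positivity)]
  simp [sq_abs]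

lemma sum_sq_mulVec_le {a b : ℕ} (M : Matrix (Fin a) (Fin b) ℝ) (x : Fin b → ℝ) :
    ∑ i, (M.mulVec x i) ^ 2 ≤ opNorm M ^ 2 * ∑ j, (x j) ^ 2 := by
  have h := (LinearMap.toContinuousLinearMap (Matrix.toEuclideanLin M)).le_opNorm
      ((WithLp.equiv 2 (Fin b → ℝ)).symm x)
  rw [LinearMap.coe_toContinuousLinearMap'] at h
  rw [show (WithLp.equiv 2 (Fin b → ℝ)).symm x = WithLp.toLp 2 x from rfl,
    Matrix.toEuclideanLin_apply_piLp_toLp] at h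
  have h2 : ‖(WithLp.equiv 2 (Fin a → ℝ)).symm (M.mulVec x)‖ ^ 2
      ≤ (opNorm M * ‖(WithLp.equiv 2 (Fin b → ℝ)).symm x‖) ^ 2 :=
    pow_le_pow_left₀ (norm_nonneg _) h 2
  rwa [mul_pow, euclid_norm_sq, euclid_norm_sq] at h2

/-- ENNReal Cauchy-Schwarz on a set of finite measure. -/
lemma lintegral_sq_le {f : ℝ → ℝ≥0∞} {s : Set ℝ} (hf : AEMeasurable f (volume.restrict s)) :
    (∫⁻ x in s, f x) ^ 2 ≤ volume s * ∫⁻ x in s, f x ^ 2 := by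
  have hconj : Real.HolderConjugate 2 2 := Real.HolderConjugate.two_two
  have h := ENNReal.lintegral_mul_le_Lp_mul_Lq (volume.restrict s) hconj
    (aemeasurable_const (b := (1 : ℝ≥0∞))) hf
  simp only [one_mul, Pi.mul_apply, Pi.one_apply] at h
  have h2 : (∫⁻ x in s, f x) ^ 2 ≤
      ((∫⁻ _ in s, (1: ℝ≥0∞) ^ (2:ℝ)) ^ (1/(2:ℝ)) * (∫⁻ x in s, f x ^ (2:ℝ)) ^ (1/(2:ℝ))) ^ 2 :=
    pow_le_pow_left' h 2
  calc (∫⁻ x in s, f x) ^ 2 ≤ _ := h2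
    _ = (∫⁻ _ in s, (1: ℝ≥0∞) ^ (2:ℝ)) * (∫⁻ x in s, f x ^ (2:ℝ)) := by
        rw [mul_pow, ← ENNReal.rpow_natCast (_ ^ (1/(2:ℝ))) 2, ← ENNReal.rpow_natCast (_ ^ (1/(2:ℝ))) 2,
          ← ENNReal.rpow_mul, ← ENNReal.rpow_mul]
        norm_num
    _ = volume s * ∫⁻ x in s, f x ^ 2 := by
        simp only [ENNReal.one_rpow, lintegral_one, Measure.restrict_apply MeasurableSet.univ,
          univ_inter]
        congr 1
        refine lintegral_congr fun x => ?_
        rw [show ((2:ℝ)) = ((2:ℕ):ℝ) by norm_num, ENNReal.rpow_natCast]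

/-- Operator-norm bound for the short-window convolution operator
`W[u](t) = ∫_{t_{k(t)}}^t Φ(t,s) B(s) u(s) ds`, where `t_{k(t)} = τ⌊t/τ⌋`,
`‖Φ(t,s)‖_op ≤ e^{(t−s)L_f}` and `‖B(s)‖_op ≤ L_f`: for every `u ∈ L²`,
`‖W u‖²_{L²[0,T]} ≤ (τ L_f e^{τ L_f})² ‖u‖²_{L²[0,T]}`, i.e. `‖W‖_op ≤ τ L_f e^{τ L_f}`. -/
theorem short_window_operator_norm_bound {n m : ℕ}
    (T τ Lf : ℝ) (hT : 0 ≤ T) (hτ : 0 < τ) (hLf : 0 ≤ Lf)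
    (Φ : ℝ → ℝ → Matrix (Fin n) (Fin n) ℝ) (B : ℝ → Matrix (Fin n) (Fin m) ℝ)
    (hΦc : ∀ i j, Continuous fun p : ℝ × ℝ => Φ p.1 p.2 i j)
    (hBc : ∀ i j, Continuous fun s => B s i j)
    (hΦ : ∀ s t : ℝ, s ≤ t → opNorm (Φ t s) ≤ Real.exp ((t - s) * Lf))
    (hB : ∀ s, opNorm (B s) ≤ Lf)
    (u : ℝ → Fin m → ℝ) (hu : Measurable u)
    (huL2 : MemLp u 2 (volume.restrict (Icc 0 T))) :
    (∫ t in (0:ℝ)..T,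
        ∑ i, ((∫ s in (τ * (⌊t / τ⌋ : ℝ))..t, (Φ t s * B s).mulVec (u s)) i) ^ 2)
      ≤ (τ * Lf * Real.exp (τ * Lf)) ^ 2 * ∫ s in (0:ℝ)..T, ∑ j, (u s j) ^ 2 := by
  set C := Lf * Real.exp (τ * Lf) with hCdef
  have hC0 : 0 ≤ C := mul_nonneg hLf (Real.exp_pos _).le
  set G : ℝ → ℝ≥0∞ := fun s => ENNReal.ofReal (∑ j, (u s j) ^ 2) with hGdef
  have hgm : Measurable fun s => ∑ j, (u s j) ^ 2 :=
    Finset.measurable_sum _ fun j _ => ((measurable_pi_apply j).comp hu).pow_const 2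
  have hGmeas : Measurable G := hgm.ennreal_ofReal
  have hgnn : ∀ s, 0 ≤ ∑ j, (u s j) ^ 2 := fun s => Finset.sum_nonneg fun j _ => sq_nonneg _
  set L := ∫⁻ s in Ioc 0 T, G s with hLdef
  -- finiteness of L
  have hL_lt : L < ⊤ := by
    have h2 : ∫⁻ s in Icc 0 T, ((‖u s‖₊ : ℝ≥0∞)) ^ (2:ℝ) < ⊤ := by
      have := huL2.2
      rw [eLpNorm_eq_lintegral_rpow_enorm_toReal (by norm_num) (by norm_num)] at this
      simp only [ENNReal.toReal_ofNat] at this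
      rw [← ENNReal.rpow_lt_top_iff_of_pos (y := 1/(2:ℝ)) (by norm_num)]
      exact this
    have hmono : ∀ s, G s ≤ (m : ℝ≥0∞) * (‖u s‖₊ : ℝ≥0∞) ^ (2:ℝ) := by
      intro s
      have : G s = ∑ j, ((‖u s j‖₊ : ℝ≥0∞)) ^ 2 := by
        simp only [hGdef]
        rw [ENNReal.ofReal_sum_of_nonneg fun j _ => sq_nonneg _]
        refine Finset.sum_congr rfl fun j _ => ?_
        rw [← enorm_eq_nnnorm, Real.enorm_eq_ofReal_abs, ← ENNReal.ofReal_pow (abs_nonneg _), sq_abs]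
      rw [this]
      calc ∑ j, ((‖u s j‖₊ : ℝ≥0∞)) ^ 2 ≤ ∑ _j : Fin m, ((‖u s‖₊ : ℝ≥0∞)) ^ 2 := by
            refine Finset.sum_le_sum fun j _ => ?_
            refine pow_le_pow_left' ?_ 2
            exact_mod_cast ENNReal.coe_le_coe.2 (nnnorm_le_pi_nnnorm (u s) j)
        _ = (m : ℝ≥0∞) * (‖u s‖₊ : ℝ≥0∞) ^ 2 := by
            simp [Finset.sum_const, nsmul_eq_mul]
        _ = (m : ℝ≥0∞) * (‖u s‖₊ : ℝ≥0∞) ^ (2:ℝ) := by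
            rw [← ENNReal.rpow_natCast (‖u s‖₊ : ℝ≥0∞) 2]; norm_num
    calc L ≤ ∫⁻ s in Ioc 0 T, (m : ℝ≥0∞) * (‖u s‖₊ : ℝ≥0∞) ^ (2:ℝ) :=
          lintegral_mono hmono
      _ ≤ ∫⁻ s in Icc 0 T, (m : ℝ≥0∞) * (‖u s‖₊ : ℝ≥0∞) ^ (2:ℝ) :=
          lintegral_mono_set Ioc_subset_Icc_self
      _ = (m : ℝ≥0∞) * ∫⁻ s in Icc 0 T, ((‖u s‖₊ : ℝ≥0∞)) ^ (2:ℝ) :=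
          lintegral_const_mul' _ _ (by simp)
      _ < ⊤ := ENNReal.mul_lt_top (by simp) h2
  -- RHS rewrite
  have hRHS : ∫ s in (0:ℝ)..T, ∑ j, (u s j) ^ 2 = L.toReal := by
    rw [intervalIntegral.integral_of_le hT,
      integral_eq_lintegral_of_nonneg_ae (ae_of_all _ hgnn) hgm.aestronglyMeasurable]
  rw [hRHS, intervalIntegral.integral_of_le hT]
  -- name the integrand
  set W : ℝ → ℝ := fun t =>
    ∑ i, ((∫ s in (τ * (⌊t / τ⌋ : ℝ))..t, (Φ t s * B s).mulVec (u s)) i) ^ 2 with hWdef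
  have hWnn : ∀ t, 0 ≤ W t := fun t => Finset.sum_nonneg fun i _ => sq_nonneg _
  by_cases HW : Integrable W (volume.restrict (Ioc 0 T))
  swap
  · rw [integral_undef HW]
    exact mul_nonneg (sq_nonneg _) ENNReal.toReal_nonneg
  rw [integral_eq_lintegral_of_nonneg_ae (ae_of_all _ hWnn) HW.aestronglyMeasurable]
  -- pointwise bound
  have hfim : ∀ t i, Measurable fun s => ((Φ t s * B s).mulVec (u s)) i := by
    intro t i
    simp only [Matrix.mulVec, Matrix.mul_apply, dotProduct]
    refine Finset.measurable_sum _ fun j _ => Measurable.mul ?_ ((measurable_pi_apply j).comp hu)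
    refine Finset.measurable_sum _ fun k _ => Measurable.mul ?_ (hBc k j).measurable
    exact ((hΦc i k).comp (Continuous.prodMk_right t)).measurable
  have ptwise : ∀ t ∈ Ioc 0 T, ENNReal.ofReal (W t)
      ≤ (ENNReal.ofReal τ * ENNReal.ofReal C ^ 2) *
        ∫⁻ s in Ioc (τ * (⌊t / τ⌋ : ℝ)) t, G s := by
    intro t ht
    obtain ⟨ht0, htT⟩ := ht
    set a := τ * (⌊t / τ⌋ : ℝ) with hadef
    have hfl : (⌊t / τ⌋ : ℝ) ≤ t / τ := Int.floor_le _
    have hfl2 : t / τ < (⌊t / τ⌋ : ℝ) + 1 := Int.lt_floor_add_one _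
    have hflnn : (0:ℝ) ≤ (⌊t / τ⌋ : ℝ) := by
      exact_mod_cast Int.floor_nonneg.2 (div_nonneg ht0.le hτ.le)
    have ha0 : 0 ≤ a := mul_nonneg hτ.le hflnn
    have hat : a ≤ t := by
      have := mul_le_mul_of_nonneg_left hfl hτ.le
      rw [mul_div_cancel₀ _ hτ.ne'] at this
      exact this
    have hta : t - a ≤ τ := by
      have := mul_lt_mul_of_pos_left hfl2 hτ
      rw [mul_div_cancel₀ _ hτ.ne', mul_add, mul_one] at this
      linarith
    by_cases HF : Integrable (fun s => (Φ t s * B s).mulVec (u s)) (volume.restrict (Ioc a t))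
    swap
    · have : (∫ s in a..t, (Φ t s * B s).mulVec (u s)) = 0 := by
        rw [intervalIntegral.integral_of_le hat, integral_undef HF]
      rw [hWdef]
      simp only [← hadef, this, Pi.zero_apply]
      simp
    have hveq : ∀ i, (∫ s in a..t, (Φ t s * B s).mulVec (u s)) i
        = ∫ s in Ioc a t, ((Φ t s * B s).mulVec (u s)) i := by
      intro i
      rw [intervalIntegral.integral_of_le hat]
      exact ((ContinuousLinearMap.proj (R := ℝ) (φ := fun _ : Fin n => ℝ) i).integral_comp_comm
        HF).symm
    -- per-component Cauchy-Schwarz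
    have hcomp : ∀ i, ENNReal.ofReal (((∫ s in a..t, (Φ t s * B s).mulVec (u s)) i) ^ 2)
        ≤ ENNReal.ofReal τ *
          ∫⁻ s in Ioc a t, ENNReal.ofReal ((((Φ t s * B s).mulVec (u s)) i) ^ 2) := by
      intro i
      rw [hveq i]
      set f : ℝ → ℝ := fun s => ((Φ t s * B s).mulVec (u s)) i with hfdef
      have h1 : |∫ s in Ioc a t, f s| ≤ ∫ s in Ioc a t, |f s| := by
        simpa using norm_integral_le_integral_norm (μ := volume.restrict (Ioc a t)) f
      have h2 : ∫ s in Ioc a t, |f s| = (∫⁻ s in Ioc a t, ENNReal.ofReal |f s|).toReal := by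
        rw [integral_eq_lintegral_of_nonneg_ae (ae_of_all _ fun s => abs_nonneg _)
          (hfim t i).abs.aestronglyMeasurable]
      have hcs : (∫⁻ s in Ioc a t, ENNReal.ofReal |f s|) ^ 2
          ≤ ENNReal.ofReal (t - a) * ∫⁻ s in Ioc a t, ENNReal.ofReal (f s ^ 2) := by
        have := lintegral_sq_le (f := fun s => ENNReal.ofReal |f s|) (s := Ioc a t)
          ((hfim t i).abs.ennreal_ofReal.aemeasurable)
        rw [Real.volume_Ioc] at this
        refine this.trans (le_of_eq ?_)
        congr 1
        refine lintegral_congr fun s => ?_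
        rw [← ENNReal.ofReal_pow (abs_nonneg _), sq_abs]
      calc ENNReal.ofReal ((∫ s in Ioc a t, f s) ^ 2)
          = ENNReal.ofReal (|∫ s in Ioc a t, f s| ^ 2) := by rw [sq_abs]
        _ ≤ ENNReal.ofReal ((∫ s in Ioc a t, |f s|) ^ 2) :=
            ENNReal.ofReal_le_ofReal (pow_le_pow_left₀ (abs_nonneg _) h1 2)
        _ = ENNReal.ofReal ((∫⁻ s in Ioc a t, ENNReal.ofReal |f s|).toReal ^ 2) := by rw [h2]
        _ = ENNReal.ofReal ((∫⁻ s in Ioc a t, ENNReal.ofReal |f s|).toReal) ^ 2 :=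
            ENNReal.ofReal_pow ENNReal.toReal_nonneg 2
        _ ≤ (∫⁻ s in Ioc a t, ENNReal.ofReal |f s|) ^ 2 :=
            pow_le_pow_left' ENNReal.ofReal_toReal_le 2
        _ ≤ ENNReal.ofReal (t - a) * ∫⁻ s in Ioc a t, ENNReal.ofReal (f s ^ 2) := hcs
        _ ≤ ENNReal.ofReal τ * ∫⁻ s in Ioc a t, ENNReal.ofReal (f s ^ 2) :=
            mul_le_mul_left (ENNReal.ofReal_le_ofReal hta) _
    -- matrix bound
    have hmat : ∀ s ∈ Ioc a t,
        ∑ i, ((((Φ t s * B s).mulVec (u s)) i) ^ 2) ≤ C ^ 2 * ∑ j, (u s j) ^ 2 := by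
      intro s hs
      have hst : s ≤ t := hs.2
      have hts : t - s ≤ τ := by
        have := hs.1
        linarith
      have hΦb : opNorm (Φ t s) ≤ Real.exp (τ * Lf) := by
        refine (hΦ s t hst).trans (Real.exp_le_exp.2 ?_)
        exact mul_le_mul_of_nonneg_right hts hLf
      calc ∑ i, ((((Φ t s * B s).mulVec (u s)) i) ^ 2)
          = ∑ i, (((Φ t s).mulVec ((B s).mulVec (u s))) i) ^ 2 := by
            rw [Matrix.mulVec_mulVec]
        _ ≤ opNorm (Φ t s) ^ 2 * ∑ j, (((B s).mulVec (u s)) j) ^ 2 :=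
            sum_sq_mulVec_le _ _
        _ ≤ opNorm (Φ t s) ^ 2 * (opNorm (B s) ^ 2 * ∑ j, (u s j) ^ 2) := by
            refine mul_le_mul_of_nonneg_left (sum_sq_mulVec_le _ _) (sq_nonneg _)
        _ ≤ Real.exp (τ * Lf) ^ 2 * (Lf ^ 2 * ∑ j, (u s j) ^ 2) := by
            have h1 : opNorm (Φ t s) ^ 2 ≤ Real.exp (τ * Lf) ^ 2 :=
              pow_le_pow_left₀ (opNorm_nonneg' _) hΦb 2
            have h2 : opNorm (B s) ^ 2 ≤ Lf ^ 2 :=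
              pow_le_pow_left₀ (opNorm_nonneg' _) (hB s) 2
            have h3 : opNorm (B s) ^ 2 * ∑ j, (u s j) ^ 2 ≤ Lf ^ 2 * ∑ j, (u s j) ^ 2 :=
              mul_le_mul_of_nonneg_right h2 (hgnn s)
            refine mul_le_mul h1 h3 (by positivity) (by positivity)
        _ = C ^ 2 * ∑ j, (u s j) ^ 2 := by rw [hCdef]; ring
    calc ENNReal.ofReal (W t)
        = ∑ i, ENNReal.ofReal (((∫ s in a..t, (Φ t s * B s).mulVec (u s)) i) ^ 2) := by
          rw [hWdef]
          exact ENNReal.ofReal_sum_of_nonneg fun i _ => sq_nonneg _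
      _ ≤ ∑ i, (ENNReal.ofReal τ *
            ∫⁻ s in Ioc a t, ENNReal.ofReal ((((Φ t s * B s).mulVec (u s)) i) ^ 2)) :=
          Finset.sum_le_sum fun i _ => hcomp i
      _ = ENNReal.ofReal τ *
            ∫⁻ s in Ioc a t, ∑ i, ENNReal.ofReal ((((Φ t s * B s).mulVec (u s)) i) ^ 2) := by
          rw [← Finset.mul_sum, ← lintegral_finset_sum _ fun i _ =>
            (((hfim t i).pow_const 2).ennreal_ofReal)]
      _ ≤ ENNReal.ofReal τ * ∫⁻ s in Ioc a t, ENNReal.ofReal C ^ 2 * G s := by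
          refine mul_le_mul_right (setLIntegral_mono' measurableSet_Ioc fun s hs => ?_) _
          rw [← ENNReal.ofReal_sum_of_nonneg fun i _ => sq_nonneg _, hGdef,
            ← ENNReal.ofReal_pow hC0, ← ENNReal.ofReal_mul (by positivity)]
          exact ENNReal.ofReal_le_ofReal (hmat s hs)
      _ = ENNReal.ofReal τ * (ENNReal.ofReal C ^ 2 * ∫⁻ s in Ioc a t, G s) := by
          rw [lintegral_const_mul' _ _ (by simp)]
      _ = (ENNReal.ofReal τ * ENNReal.ofReal C ^ 2) * ∫⁻ s in Ioc a t, G s := by ring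
  -- Fubini step
  have swapb : (∫⁻ t in Ioc 0 T, ∫⁻ s in Ioc (τ * (⌊t / τ⌋ : ℝ)) t, G s)
      ≤ ENNReal.ofReal τ * L := by
    have hmeasE : MeasurableSet {p : ℝ × ℝ | τ * (⌊p.1 / τ⌋ : ℝ) < p.2 ∧ p.2 ≤ p.1} := by
      refine MeasurableSet.inter ?_ ?_
      · exact measurableSet_lt
          (((measurable_of_countable (fun z : ℤ => (z : ℝ))).comp
            ((measurable_fst.div_const τ).floor)).const_mul τ) measurable_snd
      · exact measurableSet_le measurable_snd measurable_fst
    have hker : AEMeasurable (Function.uncurry fun t s => (Ioc (τ * (⌊t / τ⌋ : ℝ)) t).indicator G s)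
        ((volume.restrict (Ioc 0 T)).prod volume) := by
      have : (Function.uncurry fun t s => (Ioc (τ * (⌊t / τ⌋ : ℝ)) t).indicator G s)
          = {p : ℝ × ℝ | τ * (⌊p.1 / τ⌋ : ℝ) < p.2 ∧ p.2 ≤ p.1}.indicator (fun p => G p.2) := by
        funext p
        rcases p with ⟨t, s⟩
        simp only [Function.uncurry, indicator, mem_Ioc, mem_setOf_eq]
      rw [this]
      exact ((hGmeas.comp measurable_snd).indicator hmeasE).aemeasurable
    have h1 : ∀ t, (∫⁻ s in Ioc (τ * (⌊t / τ⌋ : ℝ)) t, G s)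
        = ∫⁻ s, (Ioc (τ * (⌊t / τ⌋ : ℝ)) t).indicator G s := by
      intro t; rw [lintegral_indicator measurableSet_Ioc]
    calc (∫⁻ t in Ioc 0 T, ∫⁻ s in Ioc (τ * (⌊t / τ⌋ : ℝ)) t, G s)
        = ∫⁻ t in Ioc 0 T, ∫⁻ s, (Ioc (τ * (⌊t / τ⌋ : ℝ)) t).indicator G s := by
          exact lintegral_congr h1
      _ = ∫⁻ s, ∫⁻ t in Ioc 0 T, (Ioc (τ * (⌊t / τ⌋ : ℝ)) t).indicator G s := by
          exact lintegral_lintegral_swap hker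
      _ ≤ ∫⁻ s, (Ioc 0 T).indicator (fun s' => ENNReal.ofReal τ * G s') s := by
          refine lintegral_mono fun s => ?_
          have hAs : MeasurableSet {t : ℝ | τ * (⌊t / τ⌋ : ℝ) < s ∧ s ≤ t} :=
            (measurableSet_lt (((measurable_of_countable (fun z : ℤ => (z : ℝ))).comp
              ((measurable_id.div_const τ).floor)).const_mul τ)
              measurable_const).inter (measurableSet_le measurable_const measurable_id)
          have heq : (fun t => (Ioc (τ * (⌊t / τ⌋ : ℝ)) t).indicator G s)
              = {t : ℝ | τ * (⌊t / τ⌋ : ℝ) < s ∧ s ≤ t}.indicator (fun _ => G s) := by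
            funext t
            simp only [indicator, mem_Ioc, mem_setOf_eq]
          rw [heq, lintegral_indicator_const hAs,
            Measure.restrict_apply hAs]
          by_cases hs : s ∈ Ioc 0 T
          · rw [indicator_of_mem hs]
            refine mul_le_mul_right ?_ _ |>.trans_eq (mul_comm _ _)
            have hsub : {t : ℝ | τ * (⌊t / τ⌋ : ℝ) < s ∧ s ≤ t} ∩ Ioc 0 T ⊆ Icc s (s + τ) := by
              rintro t ⟨⟨h1t, h2t⟩, _, _⟩
              refine ⟨h2t, ?_⟩
              have hfl : (⌊t / τ⌋ : ℝ) < s / τ := by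
                rw [lt_div_iff₀ hτ]
                linarith [h1t]
              have hle : (⌊t / τ⌋ : ℤ) ≤ ⌊s / τ⌋ := Int.le_floor.2 hfl.le
              have h2 : t < τ * ((⌊t / τ⌋ : ℝ) + 1) := by
                have := Int.lt_floor_add_one (t / τ)
                have := mul_lt_mul_of_pos_left this hτ
                rwa [mul_div_cancel₀ _ hτ.ne'] at this
              have h3 : τ * ((⌊t / τ⌋ : ℝ) + 1) ≤ τ * ((⌊s / τ⌋ : ℝ) + 1) := by
                have : ((⌊t / τ⌋ : ℤ) : ℝ) ≤ ((⌊s / τ⌋ : ℤ) : ℝ) := by exact_mod_cast hle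
                nlinarith
              have h4 : τ * (⌊s / τ⌋ : ℝ) ≤ s := by
                have := Int.floor_le (s / τ)
                have := mul_le_mul_of_nonneg_left this hτ.le
                rwa [mul_div_cancel₀ _ hτ.ne'] at this
              nlinarith
            calc volume ({t : ℝ | τ * (⌊t / τ⌋ : ℝ) < s ∧ s ≤ t} ∩ Ioc 0 T)
                ≤ volume (Icc s (s + τ)) := measure_mono hsub
              _ = ENNReal.ofReal τ := by rw [Real.volume_Icc]; ring_nf
          · rw [indicator_of_notMem hs]
            have hempty : {t : ℝ | τ * (⌊t / τ⌋ : ℝ) < s ∧ s ≤ t} ∩ Ioc 0 T = ∅ := by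
              ext t
              simp only [mem_inter_iff, mem_setOf_eq, mem_Ioc, mem_empty_iff_false, iff_false]
              rintro ⟨⟨h1t, h2t⟩, h3t, h4t⟩
              have hs' : ¬ (0 < s) ∨ ¬ (s ≤ T) := by
                rw [mem_Ioc] at hs; exact not_and_or.1 hs
              rcases hs' with h | h
              · push_neg at h
                have hflnn : (0:ℝ) ≤ (⌊t / τ⌋ : ℝ) := by
                  exact_mod_cast Int.floor_nonneg.2 (div_nonneg h3t.le hτ.le)
                nlinarith
              · push_neg at h
                linarith
            rw [hempty]
            simp
      _ = ∫⁻ s in Ioc 0 T, ENNReal.ofReal τ * G s := by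
          rw [lintegral_indicator measurableSet_Ioc]
      _ = ENNReal.ofReal τ * L := lintegral_const_mul' _ _ (by simp)
  -- assemble
  have key : (∫⁻ t in Ioc 0 T, ENNReal.ofReal (W t))
      ≤ ENNReal.ofReal ((τ * C) ^ 2) * L := by
    calc (∫⁻ t in Ioc 0 T, ENNReal.ofReal (W t))
        ≤ ∫⁻ t in Ioc 0 T, (ENNReal.ofReal τ * ENNReal.ofReal C ^ 2) *
            ∫⁻ s in Ioc (τ * (⌊t / τ⌋ : ℝ)) t, G s :=
          setLIntegral_mono' measurableSet_Ioc ptwise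
      _ = (ENNReal.ofReal τ * ENNReal.ofReal C ^ 2) *
            ∫⁻ t in Ioc 0 T, ∫⁻ s in Ioc (τ * (⌊t / τ⌋ : ℝ)) t, G s :=
          lintegral_const_mul' _ _
            (ENNReal.mul_ne_top ENNReal.ofReal_ne_top
              (ENNReal.pow_ne_top ENNReal.ofReal_ne_top))
      _ ≤ (ENNReal.ofReal τ * ENNReal.ofReal C ^ 2) * (ENNReal.ofReal τ * L) :=
          mul_le_mul_right swapb _
      _ = ENNReal.ofReal ((τ * C) ^ 2) * L := by
          have hexp : ENNReal.ofReal ((τ * C) ^ 2)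
              = ENNReal.ofReal τ ^ 2 * ENNReal.ofReal C ^ 2 := by
            rw [mul_pow, ENNReal.ofReal_mul (by positivity : (0:ℝ) ≤ τ ^ 2),
              ENNReal.ofReal_pow hτ.le, ENNReal.ofReal_pow hC0]
          rw [hexp]
          ring
  calc (∫⁻ t in Ioc 0 T, ENNReal.ofReal (W t)).toReal
      ≤ (ENNReal.ofReal ((τ * C) ^ 2) * L).toReal :=
        ENNReal.toReal_mono (ENNReal.mul_ne_top ENNReal.ofReal_ne_top hL_lt.ne) key
    _ = (τ * C) ^ 2 * L.toReal := by
        rw [ENNReal.toReal_mul, ENNReal.toReal_ofReal (by positivity)]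
    _ = (τ * Lf * Real.exp (τ * Lf)) ^ 2 * L.toReal := by rw [hCdef]; ring_nf
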